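/- In any AVL tree, the number a of leaves and the number b of depth-1 nodes satisfy a ≤ 3b (assuming the tree has at least 2 nodes), since every leaf is either the child of a depth-1 node or the child of an unbalanced depth-2 node, and each depth-1 node has at most 2 leaf children while each unbalanced depth-2 node has exactly one depth-1 child. -/

import Mathlib

/-- Rooted plane binary trees: `nil` is the empty tree. -/
inductive BTree : Type
  | nil : BTree
  | node : BTree → BTree → BTree
deriving DecidableEq

/-- Height, with the empty tree having height `-1`. -/
def BTree.ht : BTree → ℤ
  | .nil => -1
  | .node l r => 1 + max l.ht r.ht

/-- Number of nodes. -/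
def BTree.size : BTree → ℕ
  | .nil => 0
  | .node l r => 1 + l.size + r.size

/-- AVL property: at every node the subtree heights differ by at most 1. -/
def BTree.isAVL : BTree → Prop
  | .nil => True
  | .node l r => |l.ht - r.ht| ≤ 1 ∧ l.isAVL ∧ r.isAVL

/-- Count the nodes (subtree positions) of a tree satisfying a predicate. -/
def BTree.cnt (p : BTree → Bool) : BTree → ℕ
  | .nil => 0
  | .node l r => (if p (.node l r) then 1 else 0) + l.cnt p + r.cnt p

/-- A node is unbalanced if its two subtrees have different heights. -/
def BTree.unbal : BTree → Bool
  | .nil => false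
  | .node l r => decide (l.ht ≠ r.ht)

/-- Number of depth-`k` nodes, i.e. nodes whose subtree has height `k`. -/
def BTree.cntDepth (k : ℤ) (t : BTree) : ℕ := t.cnt (fun s => decide (s.ht = k))

lemma BTree.ht_ge (t : BTree) : -1 ≤ t.ht := by
  induction t with
  | nil => simp [BTree.ht]
  | node l r ihl ihr =>
    have h := le_max_left l.ht r.ht
    simp only [BTree.ht]
    omega

lemma BTree.size_le_of_ht (t : BTree) (h : t.ht ≤ 0) : t.size ≤ 1 := by
  induction t with
  | nil => simp [BTree.size]
  | node l r ihl ihr =>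
    have hl := BTree.ht_ge l
    have hr := BTree.ht_ge r
    have h1 := le_max_left l.ht r.ht
    have h2 := le_max_right l.ht r.ht
    simp only [BTree.ht] at h
    have hln : l.ht ≤ 0 := by omega
    have hrn : r.ht ≤ 0 := by omega
    have hl0 : l.size = 0 := by
      cases l with
      | nil => rfl
      | node a b =>
        exfalso
        have e : (BTree.node a b).ht = 1 + max a.ht b.ht := rfl
        have := le_max_left a.ht b.ht
        have := BTree.ht_ge a
        rw [e] at hln
        omega
    have hr0 : r.size = 0 := by
      cases r with
      | nil => rfl
      | node a b =>
        exfalso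
        have e : (BTree.node a b).ht = 1 + max a.ht b.ht := rfl
        have := le_max_left a.ht b.ht
        have := BTree.ht_ge a
        rw [e] at hrn
        omega
    simp [BTree.size, hl0, hr0]

lemma BTree.aux (t : BTree) (h : t.isAVL) :
    (t.ht = -1 → t.cntDepth 0 = 0 ∧ t.cntDepth 1 = 0) ∧
    (t.ht = 0 → t.cntDepth 0 = 1 ∧ t.cntDepth 1 = 0) ∧
    (t.ht = 1 → t.cntDepth 0 + 1 ≤ 3 * t.cntDepth 1) ∧
    (2 ≤ t.ht → t.cntDepth 0 ≤ 3 * t.cntDepth 1) := by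
  induction t with
  | nil => simp [BTree.cntDepth, BTree.cnt, BTree.ht]
  | node l r ihl ihr =>
    obtain ⟨hbal, hlA, hrA⟩ := h
    replace ihl := ihl hlA
    replace ihr := ihr hrA
    have hl1 := BTree.ht_ge l
    have hr1 := BTree.ht_ge r
    rw [abs_le] at hbal
    have e0 : (BTree.node l r).cntDepth 0 =
        (if (1 + max l.ht r.ht : ℤ) = 0 then 1 else 0) + l.cntDepth 0 + r.cntDepth 0 := by
      simp [BTree.cntDepth, BTree.cnt, BTree.ht]
      by_cases hc : 1 + max l.ht r.ht = 0 <;> simp [hc]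
    have e1 : (BTree.node l r).cntDepth 1 =
        (if (1 + max l.ht r.ht : ℤ) = 1 then 1 else 0) + l.cntDepth 1 + r.cntDepth 1 := by
      simp [BTree.cntDepth, BTree.cnt, BTree.ht]
    have hht : (BTree.node l r).ht = 1 + max l.ht r.ht := rfl
    have hlcase : (l.ht = -1 ∧ l.cntDepth 0 = 0 ∧ l.cntDepth 1 = 0) ∨
        (l.ht = 0 ∧ l.cntDepth 0 = 1 ∧ l.cntDepth 1 = 0) ∨
        (l.ht = 1 ∧ l.cntDepth 0 + 1 ≤ 3 * l.cntDepth 1) ∨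
        (2 ≤ l.ht ∧ l.cntDepth 0 ≤ 3 * l.cntDepth 1) := by
      have : l.ht = -1 ∨ l.ht = 0 ∨ l.ht = 1 ∨ 2 ≤ l.ht := by omega
      rcases this with h | h | h | h
      · exact Or.inl ⟨h, ihl.1 h⟩
      · exact Or.inr (Or.inl ⟨h, ihl.2.1 h⟩)
      · exact Or.inr (Or.inr (Or.inl ⟨h, ihl.2.2.1 h⟩))
      · exact Or.inr (Or.inr (Or.inr ⟨h, ihl.2.2.2 h⟩))
    have hrcase : (r.ht = -1 ∧ r.cntDepth 0 = 0 ∧ r.cntDepth 1 = 0) ∨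
        (r.ht = 0 ∧ r.cntDepth 0 = 1 ∧ r.cntDepth 1 = 0) ∨
        (r.ht = 1 ∧ r.cntDepth 0 + 1 ≤ 3 * r.cntDepth 1) ∨
        (2 ≤ r.ht ∧ r.cntDepth 0 ≤ 3 * r.cntDepth 1) := by
      have : r.ht = -1 ∨ r.ht = 0 ∨ r.ht = 1 ∨ 2 ≤ r.ht := by omega
      rcases this with h | h | h | h
      · exact Or.inl ⟨h, ihr.1 h⟩
      · exact Or.inr (Or.inl ⟨h, ihr.2.1 h⟩)
      · exact Or.inr (Or.inr (Or.inl ⟨h, ihr.2.2.1 h⟩))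
      · exact Or.inr (Or.inr (Or.inr ⟨h, ihr.2.2.2 h⟩))
    rw [hht, e0, e1]
    rcases max_cases l.ht r.ht with ⟨hm, hm'⟩ | ⟨hm, hm'⟩ <;> rw [hm] <;>
      rcases hlcase with ⟨h1, h2, h3⟩ | ⟨h1, h2, h3⟩ | ⟨h1, h2⟩ | ⟨h1, h2⟩ <;>
      rcases hrcase with ⟨k1, k2, k3⟩ | ⟨k1, k2, k3⟩ | ⟨k1, k2⟩ | ⟨k1, k2⟩ <;>
      refine ⟨fun hh => ?_, fun hh => ?_, fun hh => ?_, fun hh => ?_⟩ <;>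
      split_ifs <;> omega

/-- In any AVL tree with at least 2 nodes, the number `a` of leaves and the number
`b` of depth-1 nodes satisfy `a ≤ 3b`. -/
theorem avl_leaves_le_three_depth_one (t : BTree) (hAVL : t.isAVL) (hn : 2 ≤ t.size) :
    t.cntDepth 0 ≤ 3 * t.cntDepth 1 := by
  have h1 : 1 ≤ t.ht := by
    by_contra hc
    have := BTree.size_le_of_ht t (by omega)
    omega
  have H := BTree.aux t hAVL
  rcases eq_or_lt_of_le h1 with h | h
  · have := H.2.2.1 h.symm
    omega
  · exact H.2.2.2 (by omega)
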